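/- arXiv:2010.05165 — 7 statements merged into one kernel-verified Lean document; each statement's English description precedes it below -/
import Mathlib

section
/- Neither 01010 nor 10101 occurs as a factor (contiguous subword) of the Thue–Morse word M_n, for any n. -/
/-- A block of `a` ones. -/
def ones (a : ℕ) : List Bool := List.replicate a true

/-- Words over {0,1} that begin and end with 0 (false = 0, true = 1). -/
def InF (v : List Bool) : Prop := v.head? = some false ∧ v.getLast? = some false

/-- `w` is a prefix of the infinite word `V`. -/
def PrefixOf (w : List Bool) (V : ℕ → Bool) : Prop :=
  ∀ i, i < w.length → w.getD i false = V i

/-- Finite stages `v 1^{a 0} v 1^{a 1} v ⋯ v`. -/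
def stage (v : List Bool) (a : ℕ → ℕ) : ℕ → List Bool
  | 0 => v
  | n + 1 => stage v a n ++ ones (a n) ++ v

/-- The infinite word `V` is built from `v`: `V = v 1^{a₁} v 1^{a₂} v ⋯`. -/
def BuiltFrom (V : ℕ → Bool) (v : List Bool) : Prop :=
  ∃ a : ℕ → ℕ, ∀ n, PrefixOf (stage v a n) V

/-- A finite word `w` is built from `v`: `w = v 1^{a₁} v ⋯ v 1^{a_k} v`, `k ≥ 1`. -/
def FBuiltFrom (w v : List Bool) : Prop :=
  ∃ a : List ℕ, a ≠ [] ∧ w = v ++ (a.map fun n => ones n ++ v).flatten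

/-- `A_V`, the set of words in `𝓕` from which `V` is built. -/
def AV (V : ℕ → Bool) : Set (List Bool) := {v | InF v ∧ BuiltFrom V v}

/-- `w` occurs in the infinite word `V` at position `k`. -/
def OccursAt (w : List Bool) (V : ℕ → Bool) (k : ℕ) : Prop :=
  ∀ i, i < w.length → w.getD i false = V (k + i)

/-- `w` is a factor (contiguous subword) of the infinite word `V`. -/
def FactorOfN (w : List Bool) (V : ℕ → Bool) : Prop := ∃ k, OccursAt w V k

/-- `w` occurs in the bi-infinite word `x` at position `k`. -/
def OccursAtZ (w : List Bool) (x : ℤ → Bool) (k : ℤ) : Prop :=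
  ∀ i, i < w.length → w.getD i false = x (k + (i : ℤ))

/-- `w` is a factor of the bi-infinite word `x`. -/
def FactorOfZ (w : List Bool) (x : ℤ → Bool) : Prop := ∃ k, OccursAtZ w x k

/-- The subshift associated to an infinite word `V`. -/
def Subshift (V : ℕ → Bool) : Set (ℤ → Bool) :=
  {x | ∀ w, FactorOfZ w x → FactorOfN w V}

/-- Thue–Morse words: `M 0 = 0`, `M (n+1) = M n ++ complement (M n)`. -/
def M : ℕ → List Bool
  | 0 => [false]
  | n + 1 => M n ++ (M n).map (fun b => !b)

/-- The Thue–Morse sequence: parity of the number of 1's in binary expansion. -/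
def tm (n : ℕ) : Bool := decide (((Nat.digits 2 n).count 1) % 2 = 1)

/-- Rank-two towers for the Thue–Morse sequence. -/
def M2 : ℕ → List Bool × List Bool
  | 0 => ([false], [false])
  | n + 1 =>
    if n % 2 = 1 then ((M2 n).1 ++ [true] ++ (M2 n).2, (M2 n).2 ++ [true] ++ (M2 n).1)
    else ((M2 n).1 ++ [true, true] ++ (M2 n).2, (M2 n).2 ++ (M2 n).1)



lemma M_len (n : ℕ) : (M n).length = 2 ^ n := by
  induction n with
  | zero => rfl
  | succ n ih => simp [M, ih, pow_succ]; ring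

lemma crossing {w s t : List Bool} (hw : w.length ≤ 5) (h : w <:+: s ++ t) :
    w <:+: s ∨ w <:+: t ∨ w <:+: s.drop (s.length - 4) ++ t.take 4 := by
  obtain ⟨u, v, huv⟩ := h
  by_cases h1 : u.length + w.length ≤ s.length
  · left
    have : s = (u ++ w ++ v).take s.length := by rw [huv, List.take_left]
    rw [this]
    have : (u ++ w ++ v).take s.length = u ++ w ++ v.take (s.length - (u.length + w.length)) := by
      rw [List.take_append, List.take_of_length_le (by simp; omega)]
      congr 1
      simp
    rw [this]
    exact ⟨u, _, rfl⟩
  · by_cases h2 : s.length ≤ u.length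
    · right; left
      have : t = (u ++ w ++ v).drop s.length := by rw [huv, List.drop_left]
      rw [this, List.append_assoc, List.drop_append_of_le_length h2]
      exact ⟨u.drop s.length, v, by simp⟩
    · right; right
      push_neg at h1 h2
      set k := s.length - u.length with hk
      have hk1 : 1 ≤ k := by omega
      have hkw : k < w.length := by omega
      -- split w
      have hsplit : (u ++ w.take k) ++ (w.drop k ++ v) = s ++ t := by
        rw [← huv, List.append_assoc, ← List.append_assoc (w.take k), List.take_append_drop,
          ← List.append_assoc]
      have hlen : (u ++ w.take k).length = s.length := by
        simp; omega
      obtain ⟨hs, ht⟩ := List.append_inj hsplit hlen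
      -- w.take k is a suffix of s with length ≤ 4, w.drop k is a prefix of t with length ≤ 4
      have h4 : s.length - 4 ≤ u.length := by
        have : k ≤ 4 := by omega
        omega
      have hsd : s.drop (s.length - 4) = u.drop (s.length - 4) ++ w.take k := by
        have : (u ++ w.take k).drop (s.length - 4) = u.drop (s.length - 4) ++ w.take k :=
          List.drop_append_of_le_length h4
        rw [hs] at this
        exact this
      have htt : t.take 4 = w.drop k ++ v.take (4 - (w.drop k).length) := by
        rw [← ht, List.take_append, List.take_of_length_le (by simp; omega)]
      refine ⟨u.drop (s.length - 4), v.take (4 - (w.drop k).length), ?_⟩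
      rw [hsd, htt]
      rw [List.append_assoc _ (List.take k w), ← List.append_assoc (List.take k w),
        List.take_append_drop, ← List.append_assoc]

lemma infix_of_map_not {w l : List Bool} (h : w <:+: l.map (fun b => !b)) :
    w.map (fun b => !b) <:+: l := by
  have := h.map (fun b => !b)
  rwa [List.map_map, show ((fun b => !b) ∘ fun b : Bool => !b) = id by funext b; simp,
    List.map_id] at this

lemma M_take4 {n : ℕ} (hn : 2 ≤ n) : (M n).take 4 = [false, true, true, false] := by
  induction n with
  | zero => omega
  | succ n ih =>
    rcases Nat.lt_or_ge n 2 with h | h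
    · interval_cases n
      · omega
      · decide
    · rw [M, List.take_append_of_le_length (by rw [M_len]; calc (4:ℕ) = 2^2 := rfl
        _ ≤ 2^n := Nat.pow_le_pow_right (by norm_num) h)]
      exact ih h

lemma M_last4 {n : ℕ} (hn : 2 ≤ n) :
    (M n).drop ((M n).length - 4) = [false, true, true, false] ∨
    (M n).drop ((M n).length - 4) = [true, false, false, true] := by
  induction n with
  | zero => omega
  | succ n ih =>
    rcases Nat.lt_or_ge n 2 with h | h
    · interval_cases n
      · omega
      · left; decide
    · have h4 : 4 ≤ (M n).length := by
        rw [M_len]; calc (4:ℕ) = 2^2 := rfl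
          _ ≤ 2^n := Nat.pow_le_pow_right (by norm_num) h
      have hlen : (M (n+1)).length - 4 = (M n).length + ((M n).length - 4) := by
        rw [M, List.length_append, List.length_map]; omega
      rw [M] at hlen ⊢
      rw [hlen, List.drop_append, List.drop_of_length_le (by omega),
        List.nil_append, show (M n).length + ((M n).length - 4) - (M n).length
          = (M n).length - 4 by omega, ← List.map_drop]
      rcases ih h with h' | h' <;> rw [h'] <;> simp

theorem stmt2 : ∀ n, ¬ ([false, true, false, true, false] <:+: M n) ∧
    ¬ ([true, false, true, false, true] <:+: M n) := by
  intro n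
  induction n with
  | zero => decide
  | succ n ih =>
    rcases Nat.lt_or_ge n 2 with h | h
    · interval_cases n <;> decide
    · obtain ⟨ih1, ih2⟩ := ih
      have htake : (List.map (fun b => !b) (M n)).take 4 = [true, false, false, true] := by
        rw [← List.map_take, M_take4 h]; rfl
      constructor <;> intro hinf <;> rw [M] at hinf
      · rcases crossing (by norm_num) hinf with h1 | h2 | h3
        · exact ih1 h1
        · exact ih2 (by have := infix_of_map_not h2; simpa using this)
        · rw [htake] at h3
          rcases M_last4 h with h' | h' <;> rw [h'] at h3 <;> revert h3 <;> decide
      · rcases crossing (by norm_num) hinf with h1 | h2 | h3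
        · exact ih2 h1
        · exact ih1 (by have := infix_of_map_not h2; simpa using this)
        · rw [htake] at h3
          rcases M_last4 h with h' | h' <;> rw [h'] at h3 <;> revert h3 <;> decide
end

section
/- The Thue–Morse sequence is cube-free: for every nonempty finite word v, the word vvv does not occur as a factor of the Thue–Morse sequence. -/
lemma tm_even (n : ℕ) : tm (2 * n) = tm n := by
  rcases Nat.eq_zero_or_pos n with h | h
  · simp [h]
  · unfold tm
    rw [Nat.digits_def' (by norm_num : (1:ℕ) < 2) (by omega)]
    simp [Nat.mul_div_cancel_left, Nat.mul_mod_right]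

lemma tm_odd (n : ℕ) : tm (2 * n + 1) = !tm n := by
  unfold tm
  rw [Nat.digits_def' (by norm_num : (1:ℕ) < 2) (by omega)]
  have h1 : (2 * n + 1) % 2 = 1 := by omega
  have h2 : (2 * n + 1) / 2 = n := by omega
  rw [h1, h2, List.count_cons]
  simp only [if_pos rfl, beq_self_eq_true]
  rcases Nat.even_or_odd ((Nat.digits 2 n).count 1) with h | h
  · have := Nat.even_iff.mp h
    simp [Nat.add_mod, this]
  · have := Nat.odd_iff.mp h
    simp [Nat.add_mod, this]

lemma no_aaa (n : ℕ) : ¬ (tm n = tm (n + 1) ∧ tm (n + 1) = tm (n + 2)) := by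
  rintro ⟨h1, h2⟩
  rcases Nat.even_or_odd n with ⟨m, hm⟩ | ⟨m, hm⟩
  · have e1 : tm n = tm m := by rw [hm, ← two_mul, tm_even]
    have e2 : tm (n + 1) = !tm m := by rw [hm, ← two_mul, tm_odd]
    rw [e1, e2] at h1
    simp at h1
  · have e1 : tm (n + 1) = tm (m + 1) := by
      rw [show n + 1 = 2 * (m + 1) by omega, tm_even]
    have e2 : tm (n + 2) = !tm (m + 1) := by
      rw [show n + 2 = 2 * (m + 1) + 1 by omega, tm_odd]
    rw [e1, e2] at h2
    simp at h2

lemma no_cube : ∀ p, 1 ≤ p → ∀ k, ¬ (∀ i < 2 * p, tm (k + i) = tm (k + p + i)) := by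
  intro p
  induction p using Nat.strong_induction_on with
  | _ p IH =>
    intro hp k H
    rcases Nat.lt_or_ge p 2 with h2 | h2
    · -- p = 1
      have hp1 : p = 1 := by omega
      subst hp1
      have h0 := H 0 (by omega)
      have h1 := H 1 (by omega)
      simp only [Nat.add_zero] at h0
      exact no_aaa k ⟨h0, h1⟩
    rcases Nat.even_or_odd p with ⟨q, hq⟩ | ⟨q, hq⟩
    · -- p = 2q, derive cube of period q at k' = ⌈k/2⌉
      have hq1 : 1 ≤ q := by omega
      set k' := (k + 1) / 2 with hk'
      apply IH q (by omega) hq1 k'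
      intro j hj
      have hb1 : k ≤ 2 * (k' + j) := by omega
      have hb2 : 2 * (k' + j) < k + 2 * p := by omega
      have := H (2 * (k' + j) - k) (by omega)
      have e1 : k + (2 * (k' + j) - k) = 2 * (k' + j) := by omega
      have e2 : k + p + (2 * (k' + j) - k) = 2 * (k' + q + j) := by omega
      rw [e1, e2, tm_even, tm_even] at this
      exact this
    · -- p = 2q+1 odd, q ≥ 1
      have hq1 : 1 ≤ q := by omega
      set m0 := (k + 1) / 2 with hm0
      have key : ∀ m, m0 ≤ m → m ≤ m0 + 1 → tm (m + q) = tm (m + q + 1) := by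
        intro m hm1 hm2
        have hb : k ≤ 2 * m := by omega
        -- even relation: tm (2m) = tm (2m + p) = tm (2(m+q)+1) = !tm (m+q)
        have HA := H (2 * m - k) (by omega)
        have eA1 : k + (2 * m - k) = 2 * m := by omega
        have eA2 : k + p + (2 * m - k) = 2 * (m + q) + 1 := by omega
        rw [eA1, eA2, tm_even, tm_odd] at HA
        -- odd relation: tm (2m+1) = tm (2m+1+p) = tm (2(m+q+1))
        have HB := H (2 * m + 1 - k) (by omega)
        have eB1 : k + (2 * m + 1 - k) = 2 * m + 1 := by omega
        have eB2 : k + p + (2 * m + 1 - k) = 2 * (m + q + 1) := by omega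
        rw [eB1, eB2, tm_odd, tm_even] at HB
        -- HA : tm m = !tm (m+q), HB : !tm m = tm (m+q+1)
        rw [← HB, HA, Bool.not_not]
      have c1 := key m0 le_rfl (by omega)
      have c2 := key (m0 + 1) (by omega) le_rfl
      have e : m0 + 1 + q = m0 + q + 1 := by omega
      rw [e] at c2
      exact no_aaa (m0 + q) ⟨c1, by
        have : m0 + q + 1 + 1 = m0 + q + 2 := by omega
        rw [← this]; exact c2⟩

lemma cube_getD (v : List Bool) (i : ℕ) (hi : i < 2 * v.length) :
    (v ++ v ++ v).getD (v.length + i) false = (v ++ v ++ v).getD i false := by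
  set p := v.length with hp
  rw [List.append_assoc]
  rw [List.getD_append_right _ _ _ _ (by omega : v.length ≤ p + i)]
  have : p + i - v.length = i := by omega
  rw [this]
  rcases Nat.lt_or_ge i p with h | h
  · rw [List.getD_append _ _ _ _ (by omega : i < v.length)]
    rw [List.getD_append _ _ _ _ (by simpa using h)]
  · rw [List.getD_append_right _ _ _ _ (by omega : v.length ≤ i)]
    rw [List.getD_append_right v (v ++ v) false i (by omega)]
    rw [List.getD_append _ _ _ _ (by omega : i - v.length < v.length)]

theorem stmt3 : ∀ v : List Bool, v ≠ [] → ¬ FactorOfN (v ++ v ++ v) tm := by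
  intro v hv ⟨k, hocc⟩
  have hp : 1 ≤ v.length := List.length_pos_iff.mpr hv
  apply no_cube v.length hp k
  intro i hi
  have hlen : (v ++ v ++ v).length = 3 * v.length := by simp; omega
  have h1 := hocc i (by omega)
  have h2 := hocc (v.length + i) (by omega)
  rw [cube_getD v i hi] at h2
  rw [← h1, show k + v.length + i = k + (v.length + i) from by omega, ← h2]
end

section
/- If V ∈ {0,1}^ℕ and x, y ∈ A_V with |y| > |x|, then either y is built from x, or there exists z ∈ A_V built from both x and y. -/
private lemma ones_count_false (t : ℕ) : (ones t).count false = 0 := by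
  simp [ones, List.count_replicate]

private lemma stage_succ (v : List Bool) (a : ℕ → ℕ) (n : ℕ) :
    stage v a (n+1) = stage v a n ++ ones (a n) ++ v := rfl

private lemma stage_count (v : List Bool) (a : ℕ → ℕ) (n : ℕ) :
    (stage v a n).count false = (n+1) * v.count false := by
  induction n with
  | zero => simp [stage]
  | succ n ih =>
    rw [stage_succ, List.count_append, List.count_append, ih, ones_count_false]
    ring

private lemma stage_ne_nil {v : List Bool} (hv : v ≠ []) (a : ℕ → ℕ) (n : ℕ) :
    stage v a n ≠ [] := by
  cases n with
  | zero => exact hv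
  | succ n => rw [stage_succ]; simp [hv]

private lemma stage_getLast? {v : List Bool} (hv : v ≠ []) (a : ℕ → ℕ) (n : ℕ) :
    (stage v a n).getLast? = v.getLast? := by
  cases n with
  | zero => rfl
  | succ n =>
    rw [stage_succ, List.getLast?_append]
    cases hl : v.getLast? with
    | none => exact absurd (List.getLast?_eq_none_iff.mp hl) hv
    | some b => rfl

private lemma stage_head? {v : List Bool} (hv : v ≠ []) (a : ℕ → ℕ) (n : ℕ) :
    (stage v a n).head? = v.head? := by
  induction n with
  | zero => rfl
  | succ n ih =>
    rw [stage_succ, List.append_assoc, List.head?_append_of_ne_nil _ (stage_ne_nil hv a n)]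
    exact ih

private lemma stage_eq_append (v : List Bool) (a : ℕ → ℕ) (n : ℕ) :
    stage v a n = v ++ (((List.range n).map a).map fun c => ones c ++ v).flatten := by
  induction n with
  | zero => simp [stage]
  | succ n ih =>
    rw [stage_succ, ih, List.range_succ]
    simp [List.append_assoc]

private lemma fbuilt_stage (v : List Bool) (a : ℕ → ℕ) {n : ℕ} (hn : 1 ≤ n) :
    FBuiltFrom (stage v a n) v := by
  refine ⟨(List.range n).map a, ?_, stage_eq_append v a n⟩
  simp [List.range_eq_nil]
  omega

private lemma stage_congr {v : List Bool} {a a' : ℕ → ℕ} {n : ℕ}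
    (h : ∀ i, i < n → a i = a' i) : stage v a n = stage v a' n := by
  induction n with
  | zero => rfl
  | succ n ih =>
    rw [stage_succ, stage_succ, ih (fun i hi => h i (by omega)), h n (by omega)]

private lemma stage_add (v : List Bool) (a : ℕ → ℕ) (n m : ℕ) :
    stage v a (n + 1 + m) = stage v a n ++ ones (a n) ++ stage v (fun i => a (n + 1 + i)) m := by
  induction m with
  | zero => rfl
  | succ m ih =>
    have : n + 1 + (m + 1) = (n + 1 + m) + 1 := by omega
    rw [this, stage_succ, ih, stage_succ]
    simp [List.append_assoc]

private lemma prefixOf_mono {V : ℕ → Bool} {w w' : List Bool} (h : w' <+: w)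
    (hw : PrefixOf w V) : PrefixOf w' V := by
  obtain ⟨rest, rfl⟩ := h
  intro i hi
  have h2 := hw i (by rw [List.length_append]; omega)
  rw [← h2]
  exact (List.getD_append _ _ _ _ hi).symm

private lemma prefixOf_prefix {V : ℕ → Bool} {w1 w2 : List Bool} (h1 : PrefixOf w1 V)
    (h2 : PrefixOf w2 V) (h : w1.length ≤ w2.length) : w1 <+: w2 := by
  have heq : w1 = w2.take w1.length := by
    apply List.ext_getElem (by simp; omega)
    intro i hi1 hi2
    have e1 : w1.getD i false = V i := h1 i hi1
    have e2 : w2.getD i false = V i := h2 i (by omega)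
    rw [List.getD_eq_getElem _ _ hi1] at e1
    rw [List.getD_eq_getElem _ _ (by omega : i < w2.length)] at e2
    rw [List.getElem_take, e2, ← e1]
  rw [heq]
  exact List.take_prefix _ _

private lemma getLast?_false_ne_nil {w : List Bool} (h : w.getLast? = some false) : w ≠ [] := by
  intro h0; rw [h0] at h; simp at h

private lemma prefixOf_unique_aux {V : ℕ → Bool} {w1 w2 : List Bool} (h1 : PrefixOf w1 V)
    (h2 : PrefixOf w2 V) (g2 : w2.getLast? = some false)
    (hc : w1.count false = w2.count false) (hl : w1.length ≤ w2.length) : w1 = w2 := by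
  obtain ⟨rest, hrest⟩ := prefixOf_prefix h1 h2 hl
  rcases eq_or_ne rest [] with rfl | hne
  · rw [← hrest]; simp
  · exfalso
    have hg : rest.getLast? = some false := by
      rw [← hrest, List.getLast?_append] at g2
      cases hr : rest.getLast? with
      | none => exact absurd (List.getLast?_eq_none_iff.mp hr) hne
      | some b => rw [hr] at g2; simpa using g2
    have hmem : false ∈ rest := by
      have he : rest.getLast hne = false := by
        have h4 := List.getLast?_eq_getLast hne
        rw [h4] at hg
        exact Option.some_injective _ hg
      exact he ▸ List.getLast_mem hne
    have : 0 < rest.count false := List.count_pos_iff.mpr hmem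
    rw [← hrest, List.count_append] at hc
    omega

private lemma prefixOf_unique {V : ℕ → Bool} {w1 w2 : List Bool} (h1 : PrefixOf w1 V)
    (h2 : PrefixOf w2 V) (g1 : w1.getLast? = some false) (g2 : w2.getLast? = some false)
    (hc : w1.count false = w2.count false) : w1 = w2 := by
  rcases le_total w1.length w2.length with hl | hl
  · exact prefixOf_unique_aux h1 h2 g2 hc hl
  · exact (prefixOf_unique_aux h2 h1 g1 hc.symm hl).symm

private lemma exists_zero_prefix (w : List Bool) : ∀ (v : ℕ), 1 ≤ v → v ≤ w.count false →
    ∃ u, u <+: w ∧ u.getLast? = some false ∧ u.count false = v := by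
  induction w using List.reverseRecOn with
  | nil => intro v h1 h2; simp at h2; omega
  | append_singleton ws b ih =>
    intro v h1 h2
    cases b with
    | false =>
      have hcnt : (ws ++ [false]).count false = ws.count false + 1 := by
        simp [List.count_append]
      rcases eq_or_lt_of_le h2 with heq | hlt
      · exact ⟨ws ++ [false], List.prefix_refl _, by simp, heq.symm⟩
      · obtain ⟨u, hu, hg, hc⟩ := ih v h1 (by omega)
        exact ⟨u, hu.trans (List.prefix_append _ _), hg, hc⟩
    | true =>
      have hcnt : (ws ++ [true]).count false = ws.count false := by
        simp [List.count_append]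
      obtain ⟨u, hu, hg, hc⟩ := ih v h1 (by omega)
      exact ⟨u, hu.trans (List.prefix_append _ _), hg, hc⟩

private lemma eq_ones_append {w : List Bool} (hg : w.getLast? = some false)
    (hc : w.count false = 1) : ∃ t, w = ones t ++ [false] := by
  induction w using List.reverseRecOn with
  | nil => simp at hg
  | append_singleton ws b _ =>
    have hb : b = false := by
      rw [List.getLast?_append] at hg; simpa using hg
    subst hb
    have hws : ws.count false = 0 := by
      simp [List.count_append] at hc; omega
    have : ws = List.replicate ws.length true := by
      apply List.eq_replicate_of_mem
      intro c hcmem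
      cases c with
      | true => rfl
      | false => exact absurd hcmem (List.count_eq_zero.mp hws)
    refine ⟨ws.length, ?_⟩
    conv_lhs => rw [this]
    rfl

private lemma zero_prefix_step {y u1 u2 : List Bool} (p1 : u1 <+: y) (p2 : u2 <+: y)
    (g1 : u1.getLast? = some false) (g2 : u2.getLast? = some false)
    {v : ℕ} (c1 : u1.count false = v) (c2 : u2.count false = v + 1) :
    ∃ t, u2 = u1 ++ (ones t ++ [false]) := by
  rcases List.prefix_or_prefix_of_prefix p1 p2 with hp | hp
  · obtain ⟨rest, rfl⟩ := hp
    have hne : rest ≠ [] := by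
      intro h0; rw [h0] at c2; simp at c2; omega
    have hg : rest.getLast? = some false := by
      rw [List.getLast?_append] at g2
      cases hr : rest.getLast? with
      | none => exact absurd (List.getLast?_eq_none_iff.mp hr) hne
      | some b => rw [hr] at g2; simpa using g2
    have hcr : rest.count false = 1 := by
      rw [List.count_append] at c2; omega
    obtain ⟨t, ht⟩ := eq_ones_append hg hcr
    exact ⟨t, by rw [ht]⟩
  · exfalso
    have := hp.sublist.count_le false
    omega

private lemma exists_block_prefix (y : List Bool) (b : ℕ → ℕ) (k : ℕ) :
    ∃ B : List Bool, B ++ y = stage y b k ∧ B.count false = k * y.count false := by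
  induction k with
  | zero => exact ⟨[], rfl, by simp⟩
  | succ k ih =>
    refine ⟨stage y b k ++ ones (b k), ?_, ?_⟩
    · rw [stage_succ]
    · rw [List.count_append, stage_count, ones_count_false]; ring

private lemma getLast?_append_right {l1 l2 : List Bool} (h : l2 ≠ []) :
    (l1 ++ l2).getLast? = l2.getLast? := by
  rw [List.getLast?_append]
  cases hr : l2.getLast? with
  | none => exact absurd (List.getLast?_eq_none_iff.mp hr) h
  | some b => rfl

theorem stmt7 (V : ℕ → Bool) (x y : List Bool) (hx : x ∈ AV V) (hy : y ∈ AV V)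
    (h : x.length < y.length) :
    FBuiltFrom y x ∨ ∃ z ∈ AV V, FBuiltFrom z x ∧ FBuiltFrom z y := by
  obtain ⟨hxF, a, ha⟩ := hx
  obtain ⟨hyF, b, hb⟩ := hy
  have hxne : x ≠ [] := by intro h0; rw [h0] at hxF; simp [InF] at hxF
  have hyne : y ≠ [] := by intro h0; rw [h0] at hyF; simp [InF] at hyF
  have hxg : x.getLast? = some false := hxF.2
  have hyg : y.getLast? = some false := hyF.2
  have hxcons : x = false :: x.tail := by
    cases hx0 : x with
    | nil => exact absurd hx0 hxne
    | cons c t =>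
      have h1 := hxF.1
      rw [hx0] at h1
      simp at h1
      rw [h1]
      rfl
  have hxPre : PrefixOf x V := ha 0
  have hyPre : PrefixOf y V := hb 0
  have hr1 : 1 ≤ x.count false := by
    apply List.count_pos_iff.mpr
    rw [hxcons]; exact List.mem_cons_self
  have hRr : x.count false < y.count false := by
    obtain ⟨rest, hrest⟩ := prefixOf_prefix hxPre hyPre h.le
    have hne : rest ≠ [] := by
      intro h0; rw [h0] at hrest; simp at hrest
      rw [hrest] at h; omega
    have hg : rest.getLast? = some false := by
      rw [← hrest, getLast?_append_right hne] at hyg; exact hyg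
    have hmem : false ∈ rest := by
      have he : rest.getLast hne = false := by
        have h4 := List.getLast?_eq_getLast hne
        rw [h4] at hg
        exact Option.some_injective _ hg
      exact he ▸ List.getLast_mem hne
    have hpos : 0 < rest.count false := List.count_pos_iff.mpr hmem
    rw [← hrest, List.count_append]
    omega
  by_cases hdvd : x.count false ∣ y.count false
  · -- y is built from x
    obtain ⟨w', hw'⟩ := hdvd
    have hw'2 : 2 ≤ w' := by
      have h0 : w' ≠ 0 := by rintro rfl; simp at hw'; omega
      have h1 : w' ≠ 1 := by rintro rfl; simp at hw'; omega
      omega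
    have hyeq : y = stage x a (w' - 1) := by
      apply prefixOf_unique hyPre (ha (w'-1)) hyg
        (by rw [stage_getLast? hxne]; exact hxg)
      rw [stage_count]
      have h2 : w' - 1 + 1 = w' := by omega
      rw [h2, hw']
      ring
    exact Or.inl (hyeq ▸ fbuilt_stage x a (by omega))
  · -- common word z
    set L := Nat.lcm (x.count false) (y.count false) with hLdef
    set u := L / x.count false with hudef
    set w := L / y.count false with hwdef
    have hur : u * x.count false = L := Nat.div_mul_cancel (Nat.dvd_lcm_left _ _)
    have hwR : w * y.count false = L := Nat.div_mul_cancel (Nat.dvd_lcm_right _ _)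
    have hLpos : 0 < L := Nat.pos_of_ne_zero (Nat.lcm_ne_zero (by omega) (by omega))
    have hRL : y.count false ≤ L := Nat.le_of_dvd hLpos (Nat.dvd_lcm_right _ _)
    have hLdvd : ∀ m, x.count false ∣ m → y.count false ∣ m → L ∣ m :=
      fun m h1 h2 => Nat.lcm_dvd h1 h2
    have hxL : x.count false ∣ L := Nat.dvd_lcm_left _ _
    clear_value w u L
    have hu2 : 2 ≤ u := by
      by_contra hc
      push_neg at hc
      have h5 := Nat.mul_le_mul_right (x.count false) (show u ≤ 1 by omega)
      rw [one_mul, hur] at h5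
      omega
    have hw2 : 2 ≤ w := by
      have h0 : w ≠ 0 := by
        rintro h0; rw [h0, zero_mul] at hwR; omega
      have h1 : w ≠ 1 := by
        rintro h1; rw [h1, one_mul] at hwR
        rw [← hwR] at hxL
        exact hdvd hxL
      omega
    have hR'pos : 0 < y.count false := by omega
    have main2 : ∀ S i, i < u - 1 → a (S * u + i) = a i := by
      intro S i hi
      have humul : (u - 1) * x.count false + x.count false = u * x.count false := by
        have h8 : u - 1 + 1 = u := by omega
        calc (u-1) * x.count false + x.count false = ((u-1)+1) * x.count false := by ring
        _ = u * x.count false := by rw [h8]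
      have hm'R : ((i+1) * x.count false) % y.count false ≠ 0 := by
        intro h0
        have hdR : y.count false ∣ (i+1) * x.count false := Nat.dvd_of_mod_eq_zero h0
        have hdr : x.count false ∣ (i+1) * x.count false := dvd_mul_left _ _
        have hLd : L ∣ (i+1) * x.count false := hLdvd _ hdr hdR
        have hpos : 0 < (i+1) * x.count false := by positivity
        have hle : L ≤ (i+1) * x.count false := Nat.le_of_dvd hpos hLd
        have hlt1 : (i+1) * x.count false ≤ (u-1) * x.count false :=
          Nat.mul_le_mul_right _ (by omega)
        omega
      set v := ((i+1) * x.count false) % y.count false with hvdef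
      have hv1 : 1 ≤ v := Nat.pos_of_ne_zero hm'R
      have hvR : v < y.count false := Nat.mod_lt _ hR'pos
      obtain ⟨w1, hw1p, hw1g, hw1c⟩ := exists_zero_prefix y v hv1 (by omega)
      obtain ⟨w2, hw2p, hw2g, hw2c⟩ := exists_zero_prefix y (v+1) (by omega) (by omega)
      obtain ⟨t, ht⟩ := zero_prefix_step hw1p hw2p hw1g hw2g hw1c hw2c
      have sub : ∀ n, ((n+1) * x.count false) % y.count false = v → a n = t := by
        intro n hn
        obtain ⟨B, hBy, hBc⟩ := exists_block_prefix y b (((n+1) * x.count false) / y.count false)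
        have hkv : (((n+1) * x.count false) / y.count false) * y.count false + v
            = (n+1) * x.count false := by
          have h9 := Nat.div_add_mod ((n+1) * x.count false) (y.count false)
          rw [hn] at h9
          rw [mul_comm]
          exact h9
        have hBw1pre : PrefixOf (B ++ w1) V := by
          apply prefixOf_mono ?_ (hb (((n+1) * x.count false) / y.count false))
          obtain ⟨rest, hrest⟩ := hw1p
          exact ⟨rest, by rw [List.append_assoc, hrest, hBy]⟩
        have hBw1g : (B ++ w1).getLast? = some false := by
          rw [getLast?_append_right (getLast?_false_ne_nil hw1g)]; exact hw1g
        have hsg : (stage x a n).getLast? = some false := by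
          rw [stage_getLast? hxne]; exact hxg
        have hscnt : (stage x a n).count false = (B ++ w1).count false := by
          rw [stage_count, List.count_append, hBc, hw1c]
          exact hkv.symm
        have hw12 : stage x a n = B ++ w1 := prefixOf_unique (ha n) hBw1pre hsg hBw1g hscnt
        have hP1pre : PrefixOf (stage x a n ++ (ones (a n) ++ [false])) V := by
          apply prefixOf_mono ?_ (ha (n+1))
          refine ⟨x.tail, ?_⟩
          have hfx : [false] ++ x.tail = x := by
            rw [List.singleton_append]; exact hxcons.symm
          rw [stage_succ]
          simp only [List.append_assoc]
          rw [hfx]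
        have hQpre : PrefixOf (B ++ w2) V := by
          apply prefixOf_mono ?_ (hb (((n+1) * x.count false) / y.count false))
          obtain ⟨rest, hrest⟩ := hw2p
          exact ⟨rest, by rw [List.append_assoc, hrest, hBy]⟩
        have hP1g : (stage x a n ++ (ones (a n) ++ [false])).getLast? = some false := by
          rw [getLast?_append_right (by simp : (ones (a n) ++ [false] : List Bool) ≠ []),
            getLast?_append_right (by simp : ([false] : List Bool) ≠ [])]
          rfl
        have hQg : (B ++ w2).getLast? = some false := by
          rw [getLast?_append_right (getLast?_false_ne_nil hw2g)]; exact hw2g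
        have hcnt2 : (stage x a n ++ (ones (a n) ++ [false])).count false
            = (B ++ w2).count false := by
          rw [List.count_append, List.count_append, List.count_append, stage_count,
            ones_count_false, hBc, hw2c]
          have hone : List.count false [false] = 1 := by simp
          omega
        have hPQ := prefixOf_unique hP1pre hQpre hP1g hQg hcnt2
        rw [hw12, ht, List.append_assoc] at hPQ
        have h10 := List.append_cancel_left hPQ
        have h11 := List.append_cancel_left h10
        have h12 := congrArg List.length h11
        simp [ones] at h12
        exact h12
      have e1 : a (S * u + i) = t := by
        apply sub
        have h13 : u * x.count false = w * y.count false := by rw [hur, hwR]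
        have h14 : (S * u + i + 1) * x.count false
            = (i+1) * x.count false + (S * w) * y.count false := by
          calc (S * u + i + 1) * x.count false
              = (i+1) * x.count false + S * (u * x.count false) := by ring
          _ = (i+1) * x.count false + S * (w * y.count false) := by rw [h13]
          _ = (i+1) * x.count false + (S * w) * y.count false := by ring
        rw [h14, Nat.add_mul_mod_self_right]
      have e2 : a i = t := sub i hvdef.symm
      rw [e1, e2]
    have hu1 : u - 1 + 1 = u := by omega
    have hw1' : w - 1 + 1 = w := by omega
    have hzy : stage x a (u - 1) = stage y b (w - 1) := by
      apply prefixOf_unique (ha _) (hb _)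
        (by rw [stage_getLast? hxne]; exact hxg)
        (by rw [stage_getLast? hyne]; exact hyg)
      rw [stage_count, stage_count, hu1, hw1', hur, hwR]
    have hcl : ∀ s, stage (stage x a (u - 1)) (fun s' => a (s' * u + (u-1))) s
        = stage x a (s * u + (u - 1)) := by
      intro s
      induction s with
      | zero =>
        have h4 : 0 * u + (u - 1) = u - 1 := by omega
        rw [h4]
        rfl
      | succ s ih =>
        rw [stage_succ, ih]
        have hm : (s+1) * u = s * u + u := by ring
        have h5 : (s+1) * u + (u-1) = (s * u + (u-1)) + 1 + (u-1) := by omega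
        rw [h5, stage_add]
        congr 1
        apply stage_congr
        intro j hj
        have h6 : s * u + (u-1) + 1 + j = (s+1) * u + j := by omega
        rw [h6]
        exact (main2 (s+1) j hj).symm
    refine Or.inr ⟨stage x a (u - 1), ⟨⟨?_, ?_⟩, ?_⟩, ?_, ?_⟩
    · rw [stage_head? hxne]; exact hxF.1
    · rw [stage_getLast? hxne]; exact hxg
    · exact ⟨fun s' => a (s' * u + (u-1)), fun s => by rw [hcl s]; exact ha _⟩
    · exact fbuilt_stage x a (by omega)
    · exact hzy ▸ fbuilt_stage y b (by omega)
end

section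
/- For any V ∈ {0,1}^ℕ, A_V is infinite if and only if there exists a generating sequence (v_n) with v_0 = 0 and v_{n+1} = v_n 1^{a_{n,1}} v_n ⋯ v_n 1^{a_{n,q_n−1}} v_n (q_n ≥ 2) such that v_n is a prefix of V for every n. -/
namespace S8

variable {V : ℕ → Bool}

/-- positions of zeros -/
def Zf (V : ℕ → Bool) (hz : ∀ n, ∃ x, n < x ∧ V x = false) : ℕ → ℕ
  | 0 => 0
  | i + 1 => Nat.find (hz (Zf V hz i))

variable (hz : ∀ n, ∃ x, n < x ∧ V x = false)

lemma Zf_lt (i : ℕ) : Zf V hz i < Zf V hz (i + 1) := (Nat.find_spec (hz (Zf V hz i))).1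

lemma Zf_mono : StrictMono (Zf V hz) := strictMono_nat_of_lt_succ (Zf_lt hz)

lemma Zf_false (h0 : V 0 = false) (i : ℕ) : V (Zf V hz i) = false := by
  cases i with
  | zero => exact h0
  | succ i => exact (Nat.find_spec (hz (Zf V hz i))).2

lemma Zf_next_le {y i : ℕ} (hy : V y = false) (hlt : Zf V hz i < y) :
    Zf V hz (i + 1) ≤ y := Nat.find_min' (hz (Zf V hz i)) ⟨hlt, hy⟩

lemma between_true {i x : ℕ} (h1 : Zf V hz i < x) (h2 : x < Zf V hz (i + 1)) :
    V x = true := by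
  by_contra h
  have hx : V x = false := by
    cases hVx : V x with
    | false => rfl
    | true => exact absurd hVx h
  exact absurd (Zf_next_le hz hx h1) (by omega)

lemma Zf_next_eq (h0 : V 0 = false) {i y : ℕ} (hy : V y = false) (hlt : Zf V hz i < y)
    (hbet : ∀ x, Zf V hz i < x → x < y → V x = true) : Zf V hz (i + 1) = y := by
  refine le_antisymm (Zf_next_le hz hy hlt) ?_
  by_contra h
  push_neg at h
  have := hbet _ (Zf_lt hz i) h
  rw [Zf_false hz h0] at this
  exact Bool.false_ne_true this

lemma exists_Zf_eq (h0 : V 0 = false) : ∀ y, V y = false → ∃ k, Zf V hz k = y := by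
  intro y
  induction y using Nat.strong_induction_on with
  | _ y ih =>
    intro hy
    rcases Nat.eq_zero_or_pos y with rfl | hpos
    · exact ⟨0, rfl⟩
    · -- find the largest zero position < y
      set y' := Nat.findGreatest (fun x => V x = false) (y - 1) with hy'
      have hy'le : y' ≤ y - 1 := Nat.findGreatest_le _
      have hy'zero : V y' = false := by
        have := Nat.findGreatest_spec (P := fun x => V x = false) (m := 0)
          (Nat.zero_le (y - 1)) h0
        simpa [hy'] using this
      obtain ⟨k, hk⟩ := ih y' (by omega) hy'zero
      refine ⟨k + 1, Zf_next_eq hz h0 hy (by omega) ?_⟩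
      intro x hx1 hx2
      rw [hk] at hx1
      by_contra h
      have hx : V x = false := by
        cases hVx : V x with
        | false => rfl
        | true => exact absurd hVx h
      exact absurd (Nat.findGreatest_is_greatest hx1 (by omega) : ¬ V x = false) (by simp [hx])

/-- block lengths of V -/
def bta (hz : ∀ n, ∃ x, n < x ∧ V x = false) (i : ℕ) : ℕ :=
  Zf V hz (i + 1) - Zf V hz i - 1

lemma Zf_succ_eq (i : ℕ) : Zf V hz (i + 1) = Zf V hz i + (bta hz i + 1) := by
  have := Zf_lt hz i
  unfold bta
  omega

/-- canonical prefixes of V -/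
def P (hz : ∀ n, ∃ x, n < x ∧ V x = false) (m : ℕ) : List Bool :=
  (List.range (Zf V hz m + 1)).map V

lemma P_length (m : ℕ) : (P hz m).length = Zf V hz m + 1 := by simp [P]

lemma P_getD {i m : ℕ} (h : i < Zf V hz m + 1) : (P hz m).getD i false = V i := by
  rw [P, List.getD_eq_getElem _ _ (by simpa using h)]
  simp

lemma P_prefix (m : ℕ) : PrefixOf (P hz m) V := by
  intro i hi
  exact P_getD hz (by simpa [P_length] using hi)

lemma P_zero (h0 : V 0 = false) : P hz 0 = [false] := by
  have : Zf V hz 0 = 0 := rfl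
  simp [P, this, List.range_succ, h0]

lemma P_inj {a b : ℕ} (h : P hz a = P hz b) : a = b := by
  have := congrArg List.length h
  rw [P_length, P_length] at this
  exact (Zf_mono hz).injective (by omega)

lemma prefix_ext {w : List Bool} (h : PrefixOf w V) :
    w = (List.range w.length).map V := by
  refine List.ext_getElem (by simp) ?_
  intro i h1 h2
  have := h i h1
  rw [List.getD_eq_getElem _ _ h1] at this
  simpa using this

lemma lastD {w : List Bool} {b : Bool} (h : w.getLast? = some b) :
    w.getD (w.length - 1) false = b := by
  rcases List.eq_nil_or_concat w with rfl | ⟨L, a, rfl⟩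
  · simp at h
  · rw [List.concat_eq_append] at *
    rw [List.getLast?_concat] at h
    obtain rfl : a = b := by simpa using h
    rw [List.getD_eq_getElem _ _ (by simp)]
    simp

lemma prefix_eq_P (h0 : V 0 = false) {w : List Bool} (hp : PrefixOf w V) (hl : w.getLast? = some false) :
    ∃ k, w = P hz k := by
  have hne : w ≠ [] := by rintro rfl; simp at hl
  have hlen : 1 ≤ w.length := List.length_pos_iff.2 hne
  have hVl : V (w.length - 1) = false := by
    rw [← hp (w.length - 1) (by omega)]
    exact lastD hl
  obtain ⟨k, hk⟩ := exists_Zf_eq hz h0 _ hVl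
  refine ⟨k, ?_⟩
  rw [prefix_ext hp, P, hk]
  congr 2
  omega


lemma P_head (m : ℕ) : (P hz m).head? = some (V 0) := by
  rw [P, List.range_succ_eq_map]
  simp

lemma P_last (m : ℕ) : (P hz m).getLast? = some (V (Zf V hz m)) := by
  rw [P, List.range_succ, List.map_append]
  simp

lemma ones_map (k c : ℕ) (h : ∀ j < c, V (k + j) = true) :
    (List.range c).map (fun j => V (k + j)) = ones c := by
  rw [ones, List.eq_replicate_iff]
  constructor
  · simp
  · intro b hb
    rw [List.mem_map] at hb
    obtain ⟨j, hj, rfl⟩ := hb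
    exact h j (by simpa using hj)

lemma P_succ (h0 : V 0 = false) (k : ℕ) : P hz (k + 1) = P hz k ++ ones (bta hz k) ++ [false] := by
  have hzs := Zf_succ_eq hz k
  rw [P, hzs, show Zf V hz k + (bta hz k + 1) + 1 = (Zf V hz k + 1) + (bta hz k + 1) by ring,
    List.range_add, List.map_append]
  rw [← P, List.append_assoc]
  congr 1
  rw [List.map_map]
  have h1 : (List.range (bta hz k + 1)).map (V ∘ fun x => Zf V hz k + 1 + x)
      = (List.range (bta hz k + 1)).map (fun j => V (Zf V hz k + 1 + j)) := rfl
  rw [h1, List.range_succ, List.map_append]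
  congr 1
  · apply ones_map
    intro j hj
    exact between_true hz (i := k) (by omega) (by omega)
  · simp only [List.map_cons, List.map_nil]
    congr 1
    have h2 : Zf V hz k + 1 + bta hz k = Zf V hz (k + 1) := by omega
    rw [h2]
    exact Zf_false hz h0 (k + 1)

lemma GR (h0 : V 0 = false) : ∀ (m k : ℕ), (∀ r < m, bta hz (k + 1 + r) = bta hz r) →
    P hz (k + (m + 1)) = P hz k ++ ones (bta hz k) ++ P hz m := by
  intro m
  induction m with
  | zero =>
    intro k _
    rw [P_zero hz h0]
    exact P_succ hz h0 k
  | succ m ih =>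
    intro k hr
    have h2 : P hz (k + (m + 1) + 1) = P hz (k + (m + 1)) ++ ones (bta hz (k + (m+1))) ++ [false] :=
      P_succ hz h0 _
    have h3 : bta hz (k + (m + 1)) = bta hz m := by
      have := hr m (by omega)
      rwa [show k + 1 + m = k + (m + 1) by ring] at this
    have h4 : P hz (m + 1) = P hz m ++ ones (bta hz m) ++ [false] := P_succ hz h0 m
    rw [show k + (m + 1 + 1) = k + (m + 1) + 1 by ring, h2,
      ih k (fun r hrr => hr r (by omega)), h3, h4]
    simp [List.append_assoc]

lemma getD_right2 (u v : List Bool) (x : ℕ) :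
    (u ++ v).getD (u.length + x) false = v.getD x false := by
  rw [List.getD_append_right _ _ _ _ (by omega)]
  congr 1
  omega

lemma GR' (h0 : V 0 = false) {k c m : ℕ}
    (hp : PrefixOf (P hz k ++ ones c ++ P hz m) V) :
    c = bta hz k ∧ (∀ r < m, bta hz (k + 1 + r) = bta hz r) ∧
      P hz k ++ ones c ++ P hz m = P hz (k + (m + 1)) := by
  have hlw : (P hz k ++ ones c ++ P hz m).length
      = (Zf V hz k + 1) + c + (Zf V hz m + 1) := by
    simp [P_length, ones]
    ring
  have hb : ∀ x ≤ Zf V hz m, V (Zf V hz k + 1 + c + x) = V x := by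
    intro x hx
    have h1 : (P hz k ++ ones c ++ P hz m).getD ((Zf V hz k + 1 + c) + x) false
        = (P hz m).getD x false := by
      have : (Zf V hz k + 1 + c) = (P hz k ++ ones c).length := by simp [P_length, ones]
      rw [this]
      exact getD_right2 _ _ x
    rw [← hp _ (by rw [hlw]; omega), h1, P_getD hz (by omega)]
  have ha : ∀ i < c, V (Zf V hz k + 1 + i) = true := by
    intro i hi
    have h1 : (P hz k ++ ones c ++ P hz m).getD (Zf V hz k + 1 + i) false
        = (ones c).getD i false := by
      rw [List.getD_append _ _ _ _ (by simp [P_length, ones]; omega)]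
      have h2 : Zf V hz k + 1 + i = (P hz k).length + i := by simp [P_length]
      rw [h2, getD_right2]
    have h3 : (ones c).getD i false = true := by
      rw [ones, List.getD_eq_getElem _ _ (by simpa using hi)]
      simp
    rw [← hp _ (by rw [hlw]; omega), h1, h3]
  -- Step 1 : next zero after Zf k
  have hc : Zf V hz (k + 1) = Zf V hz k + 1 + c := by
    apply Zf_next_eq hz h0
    · have h1 := hb 0 (by omega)
      simp only [Nat.add_zero] at h1
      rw [h1, h0]
    · omega
    · intro x hx1 hx2
      have : x = Zf V hz k + 1 + (x - (Zf V hz k + 1)) := by omega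
      rw [this]
      exact ha _ (by omega)
  have hceq : c = bta hz k := by
    have := Zf_succ_eq hz k
    omega
  -- Step 2 : zeros inside the copy of P m
  have hd : ∀ r ≤ m, Zf V hz (k + 1 + r) = Zf V hz (k + 1) + Zf V hz r := by
    intro r
    induction r with
    | zero => intro _; simp [show Zf V hz 0 = 0 from rfl]
    | succ r ih =>
      intro hr
      have ihr := ih (by omega)
      have hmono : Zf V hz r < Zf V hz (r + 1) := Zf_lt hz r
      have hrm : Zf V hz (r + 1) ≤ Zf V hz m := (Zf_mono hz).monotone (by omega)
      have hnext : Zf V hz (k + 1 + r + 1) = Zf V hz (k + 1) + Zf V hz (r + 1) := by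
        apply Zf_next_eq hz h0
        · have := hb (Zf V hz (r + 1)) hrm
          rw [hc] at *
          rw [this]
          exact Zf_false hz h0 (r + 1)
        · omega
        · intro x hx1 hx2
          have hx' : x = Zf V hz k + 1 + c + (x - (Zf V hz k + 1 + c)) := by
            rw [← hc]; omega
          rw [hx']
          rw [hb (x - (Zf V hz k + 1 + c)) (by rw [← hc] at *; omega)]
          apply between_true hz (i := r) <;> rw [← hc] at * <;> omega
      rw [show k + 1 + (r + 1) = k + 1 + r + 1 by ring, hnext]
  have hwin : ∀ r < m, bta hz (k + 1 + r) = bta hz r := by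
    intro r hr
    have h1 := hd r (by omega)
    have h2 := hd (r + 1) (by omega)
    rw [show k + 1 + (r + 1) = k + 1 + r + 1 by ring] at h2
    unfold bta
    rw [h2, h1]
    have := Zf_lt hz r
    omega
  refine ⟨hceq, hwin, ?_⟩
  have hend : Zf V hz (k + (m + 1)) = Zf V hz (k + 1) + Zf V hz m := by
    have := hd m le_rfl
    rw [show k + 1 + m = k + (m + 1) by ring] at this
    exact this
  have hlen2 : (P hz k ++ ones c ++ P hz m).length = Zf V hz (k + (m + 1)) + 1 := by
    rw [hlw, hend, hc]
    ring
  rw [prefix_ext hp, hlen2, ← P]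

/-- the key periodicity property -/
def GoodM (hz : ∀ n, ∃ x, n < x ∧ V x = false) (M : ℕ) : Prop :=
  ∀ n, (n + 1) % M ≠ 0 → bta hz n = bta hz (n % M)

lemma mod_helper {M r : ℕ} (t : ℕ) (h : r < M) : ((t + 1) * M + r) % M = r := by
  rw [show (t + 1) * M + r = M * (t + 1) + r by ring, Nat.mul_add_mod]
  exact Nat.mod_eq_of_lt h

lemma good_window {m : ℕ} (hg : GoodM hz (m + 1)) (t : ℕ) :
    ∀ r < m, bta hz (m + t * (m + 1) + 1 + r) = bta hz r := by
  intro r hr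
  have hidx : m + t * (m + 1) + 1 + r = (t + 1) * (m + 1) + r := by ring
  have h1 : (m + t * (m + 1) + 1 + r) % (m + 1) = r := by
    rw [hidx]; exact mod_helper t (by omega)
  have h2 : (m + t * (m + 1) + 1 + r + 1) % (m + 1) = r + 1 := by
    rw [show m + t * (m + 1) + 1 + r + 1 = (t + 1) * (m + 1) + (r + 1) by ring]
    exact mod_helper t (by omega)
  have := hg (m + t * (m + 1) + 1 + r) (by omega)
  rwa [h1] at this

lemma stage_eq_good (h0 : V 0 = false) {m : ℕ} (hg : GoodM hz (m + 1)) :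
    ∀ t, stage (P hz m) (fun j => bta hz (m + j * (m + 1))) t
      = P hz (m + t * (m + 1)) := by
  intro t
  induction t with
  | zero => simp [stage]
  | succ t ih =>
    rw [stage, ih]
    have := GR hz h0 m (m + t * (m + 1)) (good_window hz hg t)
    rw [show m + t * (m+1) + (m + 1) = m + (t+1) * (m+1) by ring] at this
    rw [← this]

lemma built_from_of_good (h0 : V 0 = false) {m : ℕ} (hg : GoodM hz (m + 1)) :
    BuiltFrom V (P hz m) := by
  refine ⟨fun j => bta hz (m + j * (m + 1)), fun t => ?_⟩
  rw [stage_eq_good hz h0 hg t]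
  exact P_prefix hz _

lemma join_eq_good (h0 : V 0 = false) {m : ℕ} (hg : GoodM hz (m + 1)) :
    ∀ t, P hz m ++ ((List.range t).map
        (fun j => ones (bta hz (m + j * (m + 1))) ++ P hz m)).flatten
      = P hz (m + t * (m + 1)) := by
  intro t
  induction t with
  | zero => simp
  | succ t ih =>
    rw [List.range_succ, List.map_append, List.flatten_append, ← List.append_assoc, ih]
    simp only [List.map_cons, List.map_nil, List.flatten_cons, List.flatten_nil, List.append_nil]
    have := GR hz h0 m (m + t * (m + 1)) (good_window hz hg t)
    rw [show m + t * (m+1) + (m + 1) = m + (t+1) * (m+1) by ring] at this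
    rw [this, List.append_assoc]

lemma built_of_good (h0 : V 0 = false) {m m' : ℕ} (hg : GoodM hz (m + 1))
    (hdvd : (m + 1) ∣ (m' + 1)) (hlt : m < m') :
    FBuiltFrom (P hz m') (P hz m) := by
  obtain ⟨s, hs⟩ := hdvd
  have hs2 : 2 ≤ s := by nlinarith
  obtain ⟨q, rfl⟩ : ∃ q, s = q + 1 := ⟨s - 1, by omega⟩
  refine ⟨(List.range q).map (fun j => bta hz (m + j * (m + 1))), by
    simp; omega, ?_⟩
  rw [List.map_map]
  have h1 := join_eq_good hz h0 hg q
  have h2 : m + q * (m + 1) = m' := by nlinarith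
  rw [h2] at h1
  rw [← h1]
  rfl

lemma prefixOf_of_append {u t : List Bool} (h : PrefixOf (u ++ t) V) :
    PrefixOf u V := by
  intro i hi
  rw [← List.getD_append _ _ _ _ hi]
  exact h i (by simp; omega)

lemma FB_analyze (h0 : V 0 = false) (m : ℕ) :
    ∀ (a : List ℕ) (k : ℕ),
      PrefixOf (P hz k ++ (a.map fun n => ones n ++ P hz m).flatten) V →
      (P hz k ++ (a.map fun n => ones n ++ P hz m).flatten
          = P hz (k + a.length * (m + 1))) ∧
        ∀ j < a.length, ∀ r < m, bta hz (k + j * (m + 1) + 1 + r) = bta hz r := by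
  intro a
  induction a with
  | nil => intro k _; simp
  | cons c a' ih =>
    intro k hp
    have hgrp : P hz k ++ ((c :: a').map fun n => ones n ++ P hz m).flatten
        = (P hz k ++ ones c ++ P hz m) ++ (a'.map fun n => ones n ++ P hz m).flatten := by
      simp [List.append_assoc]
    rw [hgrp] at hp ⊢
    have hsub : PrefixOf (P hz k ++ ones c ++ P hz m) V := prefixOf_of_append hp
    obtain ⟨hceq, hwin, heq⟩ := GR' hz h0 hsub
    rw [heq] at hp ⊢
    obtain ⟨ih1, ih2⟩ := ih (k + (m + 1)) hp
    constructor
    · rw [ih1]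
      congr 1
      simp only [List.length_cons]
      ring
    · intro j hj r hr
      cases j with
      | zero => simpa using hwin r hr
      | succ j =>
        have := ih2 j (by simpa using hj) r hr
        rwa [show k + (m+1) + j * (m+1) + 1 + r = k + (j+1) * (m+1) + 1 + r by ring] at this

lemma good_one : GoodM hz 1 := by
  intro n hn
  exact absurd (Nat.mod_one (n + 1)) hn

lemma succ_mod_eq {a b M : ℕ} (h : a % M = b % M) : (a + 1) % M = (b + 1) % M := by
  rw [Nat.add_mod a 1 M, Nat.add_mod b 1 M, h]

lemma good_aux {M K n : ℕ} (hg : GoodM hz M) (hdvd : M ∣ K)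
    (hn : (n + 1) % M ≠ 0) (hK : K ≤ n) : bta hz n = bta hz (n - K) := by
  obtain ⟨s, rfl⟩ := hdvd
  have h1 : bta hz n = bta hz (n % M) := hg n hn
  have h2 : (n - M * s) % M = n % M := by
    conv_rhs => rw [show n = (n - M * s) + M * s by omega]
    rw [Nat.add_mul_mod_self_left]
  have h3 : ((n - M * s) + 1) % M ≠ 0 := by
    rw [show n + 1 = (n - M * s + 1) + M * s by omega] at hn
    rwa [Nat.add_mul_mod_self_left] at hn
  have h4 := hg (n - M * s) h3
  rw [h1, ← h2, ← h4]

lemma good_lcm {M1 M2 : ℕ} (hg1 : GoodM hz M1) (hg2 : GoodM hz M2)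
    (h1 : 0 < M1) (h2 : 0 < M2) : GoodM hz (Nat.lcm M1 M2) := by
  intro n
  induction n using Nat.strong_induction_on with
  | _ n ih =>
    intro hn
    have hKpos : 0 < Nat.lcm M1 M2 := Nat.lcm_pos h1 h2
    rcases lt_or_ge n (Nat.lcm M1 M2) with h | h
    · rw [Nat.mod_eq_of_lt h]
    · have hcase : (n + 1) % M1 ≠ 0 ∨ (n + 1) % M2 ≠ 0 := by
        by_contra hc
        push_neg at hc
        have hd : Nat.lcm M1 M2 ∣ n + 1 :=
          Nat.lcm_dvd (Nat.dvd_of_mod_eq_zero hc.1) (Nat.dvd_of_mod_eq_zero hc.2)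
        exact hn (Nat.mod_eq_zero_of_dvd hd)
      have hstep : bta hz n = bta hz (n - Nat.lcm M1 M2) := by
        rcases hcase with hc | hc
        · exact good_aux hz hg1 (Nat.dvd_lcm_left _ _) hc h
        · exact good_aux hz hg2 (Nat.dvd_lcm_right _ _) hc h
      have hn' : (n - Nat.lcm M1 M2 + 1) % Nat.lcm M1 M2 ≠ 0 := by
        rw [show n + 1 = (n - Nat.lcm M1 M2 + 1) + Nat.lcm M1 M2 * 1 by omega] at hn
        rwa [Nat.add_mul_mod_self_left] at hn
      have hih := ih (n - Nat.lcm M1 M2) (by omega) hn'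
      rw [hstep, hih]
      congr 1
      conv_rhs => rw [show n = (n - Nat.lcm M1 M2) + Nat.lcm M1 M2 * 1 by omega]
      rw [Nat.add_mul_mod_self_left]

lemma windows_to_hloc {m T : ℕ}
    (hw : ∀ j < T, ∀ r < m, bta hz (m + j * (m + 1) + 1 + r) = bta hz r) :
    ∀ n < m + T * (m + 1), (n + 1) % (m + 1) ≠ 0 → bta hz n = bta hz (n % (m + 1)) := by
  intro n hnb hn
  rcases lt_or_ge n (m + 1) with h | h
  · rw [Nat.mod_eq_of_lt h]
  · obtain hdm := Nat.div_add_mod n (m + 1)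
    have hrM : n % (m + 1) < m + 1 := Nat.mod_lt _ (by omega)
    have hq1 : 1 ≤ n / (m + 1) := (Nat.one_le_div_iff (by omega)).2 h
    have hrm : n % (m + 1) ≠ m := by
      intro hc
      apply hn
      have he : n + 1 = (m + 1) * (n / (m + 1) + 1) := by
        rw [show (m + 1) * (n / (m + 1) + 1) = (m + 1) * (n / (m + 1)) + (m + 1) by ring]
        omega
      rw [he, Nat.mul_mod_right]
    obtain ⟨q', hq'⟩ : ∃ q', n / (m + 1) = q' + 1 := ⟨n / (m + 1) - 1, by omega⟩
    rw [hq'] at hdm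
    have hidx : m + q' * (m + 1) + 1 + (n % (m + 1)) = n := by
      rw [show (m+1) * (q' + 1) = m + q' * (m+1) + 1 by ring] at hdm
      omega
    have hjT : q' < T := by
      have hb2 : n < (m + 1) * (T + 1) := by
        rw [show (m+1) * (T+1) = m + T * (m+1) + 1 by ring]
        omega
      have hb1 : (m + 1) * (q' + 1) ≤ n := by
        rw [show (m + 1) * (q' + 1) = m + q' * (m + 1) + 1 by ring]
        omega
      have := lt_of_le_of_lt hb1 hb2
      have := Nat.lt_of_mul_lt_mul_left this
      omega
    have hfin := hw q' hjT (n % (m + 1)) (by omega)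
    rwa [hidx] at hfin

lemma windows_to_good {m : ℕ}
    (hw : ∀ j, ∀ r < m, bta hz (m + j * (m + 1) + 1 + r) = bta hz r) :
    GoodM hz (m + 1) := by
  intro n hn
  refine windows_to_hloc hz (fun j _ => hw j) (T := n + 1) n ?_ hn
  have : n + 1 ≤ (n + 1) * (m + 1) := Nat.le_mul_of_pos_right _ (by omega)
  omega

lemma compose {M1 M2 L : ℕ} (hM1 : 0 < M1) (hM2 : 0 < M2) (hdvd : M1 ∣ M2)
    (hA : ∀ i < M2 - 1, (i + 1) % M1 ≠ 0 → bta hz i = bta hz (i % M1))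
    (hB : ∀ i < L, (i + 1) % M2 ≠ 0 → bta hz i = bta hz (i % M2)) :
    ∀ i < L, (i + 1) % M1 ≠ 0 → bta hz i = bta hz (i % M1) := by
  intro i hiL h1
  rcases lt_or_ge i (M2 - 1) with h | h
  · exact hA i h h1
  · have h2 : (i + 1) % M2 ≠ 0 := by
      intro hc
      exact h1 (Nat.mod_eq_zero_of_dvd (hdvd.trans (Nat.dvd_of_mod_eq_zero hc)))
    have hstep := hB i hiL h2
    have hi'lt : i % M2 < M2 := Nat.mod_lt _ hM2
    have hi'ne : i % M2 ≠ M2 - 1 := by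
      intro hc
      apply h2
      obtain hdm := Nat.div_add_mod i M2
      have he : i + 1 = M2 * (i / M2 + 1) := by
        rw [show M2 * (i / M2 + 1) = M2 * (i / M2) + M2 by ring]
        omega
      rw [he, Nat.mul_mod_right]
    have hmm : i % M2 % M1 = i % M1 := Nat.mod_mod_of_dvd i hdvd
    have h1' : (i % M2 + 1) % M1 ≠ 0 := by
      rw [succ_mod_eq hmm]
      exact h1
    rw [hstep, hA (i % M2) (by omega) h1', hmm]

lemma desc {ms : ℕ → ℕ}
    (hdvd : ∀ n, ms n + 1 ∣ ms (n + 1) + 1)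
    (hloc : ∀ n, ∀ i < ms (n + 1),
      (i + 1) % (ms n + 1) ≠ 0 → bta hz i = bta hz (i % (ms n + 1))) :
    ∀ d n, ∀ i < ms (n + d + 1),
      (i + 1) % (ms n + 1) ≠ 0 → bta hz i = bta hz (i % (ms n + 1)) := by
  intro d
  induction d with
  | zero => exact hloc
  | succ d ih =>
    intro n
    have hB : ∀ i < ms (n + (d + 1) + 1),
        (i + 1) % (ms (n + 1) + 1) ≠ 0 → bta hz i = bta hz (i % (ms (n + 1) + 1)) := by
      intro i hi
      exact ih (n + 1) i (by rw [show n + 1 + d + 1 = n + (d + 1) + 1 by ring]; exact hi)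
    refine compose hz (M1 := ms n + 1) (M2 := ms (n + 1) + 1)
      (by omega) (by omega) (hdvd n) ?_ hB
    simpa using hloc n

lemma ms_ge {ms : ℕ → ℕ} (hlt : ∀ n, ms n < ms (n + 1)) :
    ∀ n d, ms n + d ≤ ms (n + d) := by
  intro n d
  induction d with
  | zero => simp
  | succ d ih =>
    have := hlt (n + d)
    rw [show n + (d + 1) = n + d + 1 by ring]
    omega

lemma good_of_chain {ms : ℕ → ℕ}
    (hdvd : ∀ n, ms n + 1 ∣ ms (n + 1) + 1)
    (hlt : ∀ n, ms n < ms (n + 1))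
    (hloc : ∀ n, ∀ i < ms (n + 1),
      (i + 1) % (ms n + 1) ≠ 0 → bta hz i = bta hz (i % (ms n + 1))) :
    ∀ n, GoodM hz (ms n + 1) := by
  intro n i hi
  have hb : i < ms (n + (i + 1) + 1) := by
    have := ms_ge hlt n (i + 2)
    rw [show n + (i + 1) + 1 = n + (i + 2) by ring]
    omega
  exact desc hz hdvd hloc (i + 1) n i hb hi

lemma av_good (h0 : V 0 = false) {v : List Bool} (hin : InF v) (hb : BuiltFrom V v) :
    ∃ m, v = P hz m ∧ GoodM hz (m + 1) := by
  obtain ⟨a, ha⟩ := hb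
  have hpre : PrefixOf v V := ha 0
  obtain ⟨m, rfl⟩ := prefix_eq_P hz h0 hpre hin.2
  refine ⟨m, rfl, ?_⟩
  have hst : ∀ t, stage (P hz m) a t = P hz (m + t * (m + 1)) ∧
      ∀ j < t, ∀ r < m, bta hz (m + j * (m + 1) + 1 + r) = bta hz r := by
    intro t
    induction t with
    | zero => simp [stage]
    | succ t ih =>
      obtain ⟨ih1, ih2⟩ := ih
      have hpt : PrefixOf (P hz (m + t * (m + 1)) ++ ones (a t) ++ P hz m) V := by
        have h2 := ha (t + 1)
        rw [stage, ih1] at h2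
        exact h2
      obtain ⟨hceq, hwin, heq⟩ := GR' hz h0 hpt
      constructor
      · rw [stage, ih1, heq]
        congr 1
        ring
      · intro j hj r hr
        rcases Nat.lt_or_ge j t with h | h
        · exact ih2 j h r hr
        · have hjt : j = t := by omega
          subst hjt
          exact hwin r hr
  apply windows_to_good hz
  intro j r hr
  exact (hst (j + 1)).2 j (by omega) r hr

lemma V0_of_mem {v : List Bool} (h : v ∈ AV V) : V 0 = false := by
  obtain ⟨⟨hh, _⟩, ⟨a, ha⟩⟩ := h
  have hp : PrefixOf v V := ha 0
  cases v with
  | nil => simp at hh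
  | cons b t =>
    have h1 := hp 0 (by simp)
    simp only [List.head?_cons, Option.some.injEq] at hh
    simp only [List.getD_cons_zero] at h1
    rw [← h1, hh]

lemma zeros_infinite (hI : (AV V).Infinite) : ∀ n, ∃ x, n < x ∧ V x = false := by
  intro n
  have hns : ¬ (AV V ⊆ {l : List Bool | l.length ≤ n + 1}) := by
    intro hsub
    exact hI ((List.finite_length_le Bool (n + 1)).subset hsub)
  obtain ⟨v, hv, hlen⟩ := Set.not_subset.1 hns
  simp only [Set.mem_setOf_eq, not_le] at hlen
  obtain ⟨⟨_, hlast⟩, ⟨a, ha⟩⟩ := hv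
  have hp : PrefixOf v V := ha 0
  refine ⟨v.length - 1, by omega, ?_⟩
  rw [← hp (v.length - 1) (by omega)]
  exact lastD hlast

end S8

theorem stmt8 (V : ℕ → Bool) :
    (AV V).Infinite ↔
      ∃ v : ℕ → List Bool, v 0 = [false] ∧ (∀ n, FBuiltFrom (v (n + 1)) (v n)) ∧
        ∀ n, PrefixOf (v n) V := by
  constructor
  · intro hI
    obtain ⟨v0, hv0⟩ := hI.nonempty
    have h0 : V 0 = false := S8.V0_of_mem hv0
    have hz : ∀ n, ∃ x, n < x ∧ V x = false := S8.zeros_infinite hI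
    have hTinf : {m | S8.GoodM hz (m + 1)}.Infinite := by
      by_contra hfin
      rw [Set.not_infinite] at hfin
      have hsub : AV V ⊆ S8.P hz '' {m | S8.GoodM hz (m + 1)} := by
        intro v hv
        obtain ⟨m, hm, hg⟩ := S8.av_good hz h0 hv.1 hv.2
        exact ⟨m, hg, hm.symm⟩
      exact hI ((hfin.image _).subset hsub)
    have hpick : ∀ a : ℕ, ∃ m, S8.GoodM hz (m + 1) ∧ a < m := by
      intro a
      obtain ⟨b, hb, hab⟩ := hTinf.exists_gt a
      exact ⟨b, hb, hab⟩
    choose g hg1 hg2 using hpick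
    set Ms : ℕ → ℕ := fun n =>
      Nat.rec (motive := fun _ => ℕ) 1 (fun _ Mp => Nat.lcm Mp (g Mp + 1)) n with hMs
    have hMs0 : Ms 0 = 1 := rfl
    have hMsS : ∀ n, Ms (n + 1) = Nat.lcm (Ms n) (g (Ms n) + 1) := fun n => rfl
    have hfacts : ∀ n, 0 < Ms n ∧ S8.GoodM hz (Ms n) := by
      intro n
      induction n with
      | zero => exact ⟨one_pos, S8.good_one hz⟩
      | succ n ih =>
        rw [hMsS]
        exact ⟨Nat.lcm_pos ih.1 (by omega),
          S8.good_lcm hz ih.2 (hg1 (Ms n)) ih.1 (by omega)⟩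
    have hdvd : ∀ n, Ms n ∣ Ms (n + 1) := fun n => by
      rw [hMsS]; exact Nat.dvd_lcm_left _ _
    have hlt : ∀ n, Ms n < Ms (n + 1) := by
      intro n
      have hd : (g (Ms n) + 1) ∣ Ms (n + 1) := by
        rw [hMsS]; exact Nat.dvd_lcm_right _ _
      have hpos : 0 < Ms (n + 1) := by
        rw [hMsS]; exact Nat.lcm_pos (hfacts n).1 (by omega)
      have h1 := Nat.le_of_dvd hpos hd
      have h2 := hg2 (Ms n)
      omega
    refine ⟨fun n => S8.P hz (Ms n - 1), ?_, ?_, ?_⟩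
    · show S8.P hz (Ms 0 - 1) = [false]
      rw [show Ms 0 - 1 = 0 by rw [hMs0], S8.P_zero hz h0]
    · intro n
      have p1 : 0 < Ms n := (hfacts n).1
      have p2 : 0 < Ms (n + 1) := (hfacts (n + 1)).1
      refine S8.built_of_good hz h0 ?_ ?_ ?_
      · rw [show Ms n - 1 + 1 = Ms n by omega]
        exact (hfacts n).2
      · rw [show Ms n - 1 + 1 = Ms n by omega, show Ms (n + 1) - 1 + 1 = Ms (n + 1) by omega]
        exact hdvd n
      · have := hlt n
        omega
    · intro n
      exact S8.P_prefix hz _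
  · rintro ⟨v, hv0, hFB, hpre⟩
    have h0 : V 0 = false := by
      have h1 := hpre 0 0 (by rw [hv0]; simp)
      rw [hv0] at h1
      simpa using h1.symm
    -- positivity and growth of lengths
    have hpos : ∀ n, 1 ≤ (v n).length := by
      intro n
      induction n with
      | zero => rw [hv0]; simp
      | succ n ih =>
        obtain ⟨a, hane, hae⟩ := hFB n
        rcases a with _ | ⟨c, a'⟩
        · exact absurd rfl hane
        · rw [hae]
          simp only [List.map_cons, List.flatten_cons, List.length_append]
          omega
    have hgrow : ∀ n, (v n).length < (v (n + 1)).length := by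
      intro n
      obtain ⟨a, hane, hae⟩ := hFB n
      rcases a with _ | ⟨c, a'⟩
      · exact absurd rfl hane
      · rw [hae]
        simp only [List.map_cons, List.flatten_cons, List.length_append]
        have := hpos n
        omega
    have hlen_ge : ∀ n, n + 1 ≤ (v n).length := by
      intro n
      induction n with
      | zero => rw [hv0]; simp
      | succ n ih =>
        have := hgrow n
        omega
    have hlast : ∀ n, (v n).getLast? = some false := by
      intro n
      induction n with
      | zero => rw [hv0]; rfl
      | succ n ih =>
        obtain ⟨a, hane, hae⟩ := hFB n
        rcases List.eq_nil_or_concat a with rfl | ⟨L, b, rfl⟩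
        · exact absurd rfl hane
        · have hne : v n ≠ [] := by
            intro hnil
            rw [hnil] at ih
            simp at ih
          rw [hae]
          simp only [List.concat_eq_append, List.map_append, List.flatten_append,
            List.map_cons, List.map_nil, List.flatten_cons, List.flatten_nil, List.append_nil]
          rw [← List.append_assoc, ← List.append_assoc]
          rw [List.getLast?_append_of_ne_nil _ hne]
          exact ih
    have hz : ∀ n, ∃ x, n < x ∧ V x = false := by
      intro n
      have hl := hlen_ge (n + 1)
      refine ⟨(v (n + 1)).length - 1, by omega, ?_⟩
      rw [← hpre (n + 1) ((v (n + 1)).length - 1) (by omega)]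
      exact S8.lastD (hlast (n + 1))
    have hms : ∀ n, ∃ m, v n = S8.P hz m := by
      intro n
      induction n with
      | zero => exact ⟨0, by rw [hv0, S8.P_zero hz h0]⟩
      | succ n ih =>
        obtain ⟨m, hm⟩ := ih
        obtain ⟨a, hane, hae⟩ := hFB n
        have hp : PrefixOf (S8.P hz m ++ (a.map fun x => ones x ++ S8.P hz m).flatten) V := by
          rw [← hm, ← hae]
          exact hpre (n + 1)
        obtain ⟨he, _⟩ := S8.FB_analyze hz h0 m a m hp
        refine ⟨m + a.length * (m + 1), ?_⟩
        rw [hae, hm, he]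
    choose ms hmsv using hms
    have hrel : ∀ n, (ms n + 1 ∣ ms (n + 1) + 1) ∧ ms n < ms (n + 1) ∧
        ∀ i < ms (n + 1), (i + 1) % (ms n + 1) ≠ 0 →
          S8.bta hz i = S8.bta hz (i % (ms n + 1)) := by
      intro n
      obtain ⟨a, hane, hae⟩ := hFB n
      have hp : PrefixOf (S8.P hz (ms n) ++ (a.map fun x => ones x ++ S8.P hz (ms n)).flatten) V := by
        rw [← hmsv n, ← hae]
        exact hpre (n + 1)
      obtain ⟨he, hw⟩ := S8.FB_analyze hz h0 (ms n) a (ms n) hp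
      have hmse : ms (n + 1) = ms n + a.length * (ms n + 1) := by
        apply S8.P_inj hz
        rw [← hmsv (n + 1), hae, hmsv n, he]
      have halen : 1 ≤ a.length := List.length_pos_iff.2 hane
      have hmul : 1 * (ms n + 1) ≤ a.length * (ms n + 1) :=
        Nat.mul_le_mul_right _ halen
      refine ⟨⟨a.length + 1, by rw [hmse]; ring⟩, by omega, ?_⟩
      rw [hmse]
      exact S8.windows_to_hloc hz hw
    have hgood : ∀ n, S8.GoodM hz (ms n + 1) :=
      S8.good_of_chain hz (fun n => (hrel n).1) (fun n => (hrel n).2.1)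
        (fun n => (hrel n).2.2)
    have hmem : ∀ n, v n ∈ AV V := by
      intro n
      rw [hmsv n]
      refine ⟨⟨?_, ?_⟩, S8.built_from_of_good hz h0 (hgood n)⟩
      · rw [S8.P_head hz, h0]
      · rw [S8.P_last hz, S8.Zf_false hz h0]
    apply Set.infinite_of_injective_forall_mem (f := fun n => v n) _ hmem
    intro a b hab
    simp only at hab
    have hmono : StrictMono ms := strictMono_nat_of_lt_succ (fun n => (hrel n).2.1)
    apply hmono.injective
    apply S8.P_inj hz
    rw [← hmsv a, ← hmsv b, hab]
end

section
/- For infinite binary words V and W with associated subshifts X_V and X_W, one has X_V ⊆ X_W if and only if every finite word occurring infinitely often in V also occurs infinitely often in W. -/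
open Filter in
private lemma getD_ofFn' (f : ℤ → Bool) (a : ℤ) (len j : ℕ) (h : j < len) :
    (List.ofFn (fun i : Fin len => f (a + i))).getD j false = f (a + j) := by
  rw [List.getD_eq_getElem?_getD, List.getElem?_ofFn]
  simp [List.ofFnNthVal, h]

private lemma nhds_agree (x : ℤ → Bool) (a : ℤ) (len : ℕ) :
    {z : ℤ → Bool | ∀ j < len, z (a + j) = x (a + j)} ∈ nhds x := by
  have heq : {z : ℤ → Bool | ∀ j < len, z (a + j) = x (a + j)}
      = ⋂ j ∈ Finset.range len, {z : ℤ → Bool | z (a + j) = x (a + j)} := by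
    ext z; simp
  rw [heq]
  refine IsOpen.mem_nhds (isOpen_biInter_finset fun j _ => ?_) (by simp)
  have hpre : {z : ℤ → Bool | z (a + j) = x (a + j)}
      = (fun z : ℤ → Bool => z (a + (j : ℤ))) ⁻¹' {x (a + j)} := rfl
  rw [hpre]
  exact (continuous_apply (a + (j : ℤ))).isOpen_preimage _ (isOpen_discrete _)

theorem stmt13 (V W : ℕ → Bool) :
    Subshift V ⊆ Subshift W ↔
      ∀ w : List Bool, {k | OccursAt w V k}.Infinite → {k | OccursAt w W k}.Infinite := by
  constructor
  · intro hsub w hw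
    have hk : ∀ N : ℕ, ∃ k, N ≤ k ∧ OccursAt w V k := fun N => by
      obtain ⟨b, hb, hNb⟩ := hw.exists_gt N
      exact ⟨b, hNb.le, hb⟩
    choose k hkge hkocc using hk
    set y : ℕ → (ℤ → Bool) := fun n i => V ((k n + i).toNat) with hy
    obtain ⟨x, hx⟩ := exists_clusterPt_of_compactSpace (Filter.map y Filter.atTop)
    have hx' : MapClusterPt x Filter.atTop y := hx
    have key : ∀ (a : ℤ) (len N : ℕ), ∃ n, N ≤ n ∧ ∀ j < len, y n (a + j) = x (a + j) := by
      intro a len N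
      have := (mapClusterPt_iff_frequently.mp hx' _ (nhds_agree x a len))
      obtain ⟨n, hn, hmem⟩ := Filter.frequently_atTop.mp this N
      exact ⟨n, hn, hmem⟩
    -- w occurs in x at 0
    have hw0 : OccursAtZ w x 0 := by
      intro i hi
      obtain ⟨n, _, hn⟩ := key 0 w.length 0
      have h1 := hn i hi
      have h2 : y n (0 + (i : ℤ)) = V (k n + i) := by
        simp only [hy]
        congr 1
        omega
      rw [← h1, h2, ← hkocc _ i hi]
    -- x ∈ Subshift V
    have hxV : x ∈ Subshift V := by
      intro u ⟨a, ha⟩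
      obtain ⟨n, hnge, hn⟩ := key a u.length a.natAbs
      have hka : 0 ≤ (k n : ℤ) + a := by
        have : a.natAbs ≤ k n := le_trans hnge (hkge n)
        omega
      refine ⟨((k n : ℤ) + a).toNat, fun i hi => ?_⟩
      rw [ha i hi, ← hn i hi]
      simp only [hy]
      congr 1
      omega
    have hxW : x ∈ Subshift W := hsub hxV
    -- w occurs infinitely often in W
    apply Set.infinite_of_forall_exists_gt
    intro N
    set u : List Bool := List.ofFn (fun i : Fin (N + 1 + w.length) => x (-(N + 1 : ℤ) + i)) with hu
    have hulen : u.length = N + 1 + w.length := by simp [hu]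
    have hufac : FactorOfZ u x := by
      refine ⟨-(N + 1 : ℤ), fun i hi => ?_⟩
      rw [hulen] at hi
      exact getD_ofFn' x (-(N + 1 : ℤ)) _ i hi
    obtain ⟨p, hp⟩ := hxW u hufac
    refine ⟨p + N + 1, fun i hi => ?_, by omega⟩
    have hlt : N + 1 + i < u.length := by rw [hulen]; omega
    have h1 := hp (N + 1 + i) hlt
    have h2 : u.getD (N + 1 + i) false = x i := by
      rw [hulen] at hlt
      rw [hu, getD_ofFn' x (-(N + 1 : ℤ)) _ _ hlt]
      congr 1
      push_cast
      ring
    have h3 := hw0 i hi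
    rw [zero_add] at h3
    rw [h3, ← h2, h1]
    congr 1
    omega
  · intro h x hxV u ⟨a, ha⟩
    have huV : {k | OccursAt u V k}.Infinite := by
      apply Set.infinite_of_forall_exists_gt
      intro N
      set v : List Bool := List.ofFn (fun i : Fin (N + 1 + u.length) => x (a - (N + 1) + i)) with hv
      have hvlen : v.length = N + 1 + u.length := by simp [hv]
      have hvfac : FactorOfZ v x := by
        refine ⟨a - (N + 1), fun i hi => ?_⟩
        rw [hvlen] at hi
        exact getD_ofFn' x _ _ i hi
      obtain ⟨p, hp⟩ := hxV v hvfac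
      refine ⟨p + N + 1, fun i hi => ?_, by omega⟩
      have hlt : N + 1 + i < v.length := by rw [hvlen]; omega
      have h1 := hp (N + 1 + i) hlt
      have h2 : v.getD (N + 1 + i) false = x (a + i) := by
        rw [hvlen] at hlt
        rw [hv, getD_ofFn' x _ _ _ hlt]
        congr 1
        push_cast
        ring
      rw [ha i hi, ← h2, h1]
      congr 1
      omega
    obtain ⟨p, hp⟩ := (h u huV).nonempty
    exact ⟨p, hp⟩
end

section
/- Every infinite periodic binary word starting with 0 is rank-one. -/
lemma split3_aux (V : ℕ → Bool) (L a m : ℕ) :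
    (List.range (L + a + m)).map V =
      (List.range L).map V ++ (List.range a).map (fun i => V (L + i))
        ++ (List.range m).map (fun i => V (L + a + i)) := by
  rw [List.range_add, List.range_add]
  simp [List.map_map, Function.comp_def]

theorem stmt16 (V : ℕ → Bool) (h : ∃ p > 0, ∀ i, V (i + p) = V i)
    (h0 : V 0 = false) : (AV V).Infinite := by
  obtain ⟨p, hp, hper⟩ := h
  have hmul : ∀ m i, V (i + m * p) = V i := by
    intro m
    induction m with
    | zero => simp
    | succ m ih =>
      intro i
      rw [show i + (m + 1) * p = (i + m * p) + p by ring, hper, ih]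
  set z := Nat.findGreatest (fun i => V i = false) (p - 1) with hzdef
  have hzle : z ≤ p - 1 := Nat.findGreatest_le _
  have hzlt : z < p := by omega
  have hVz : V z = false :=
    Nat.findGreatest_spec (P := fun i => V i = false) (Nat.zero_le _) h0
  have hone : ∀ j, z < j → j < p → V j = true := by
    intro j hj hjp
    have h1 : ¬(V j = false) := Nat.findGreatest_is_greatest hj (by omega)
    cases hVj : V j with
    | false => exact absurd hVj h1
    | true => rfl
  set a : ℕ := p - 1 - z with hadef
  have hgetD : ∀ (L i : ℕ), i < L → ((List.range L).map V).getD i false = V i := by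
    intro L i hi
    rw [List.getD_eq_getElem _ _ (by simpa using hi)]
    simp
  apply Set.infinite_of_injective_forall_mem
    (f := fun k : ℕ => (List.range (z + k * p + 1)).map V)
  · intro k1 k2 he
    have hl : z + k1 * p + 1 = z + k2 * p + 1 := by
      have := congrArg List.length he
      simpa using this
    have : k1 * p = k2 * p := by omega
    exact Nat.eq_of_mul_eq_mul_right hp this
  · intro k
    constructor
    · constructor
      · rw [show z + k * p + 1 = (z + k * p) + 1 from rfl, List.range_succ_eq_map]
        simpa using h0
      · rw [show z + k * p + 1 = (z + k * p) + 1 from rfl, List.range_succ, List.map_append]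
        simp only [List.map_cons, List.map_nil]
        rw [List.getLast?_concat]
        rw [hmul k z, hVz]
    · refine ⟨fun _ => a, ?_⟩
      have hstage : ∀ n, stage ((List.range (z + k * p + 1)).map V) (fun _ => a) n
          = (List.range (z + k * p + 1 + n * ((k + 1) * p))).map V := by
        intro n
        induction n with
        | zero => simp [stage]
        | succ n ih =>
          show stage _ _ n ++ ones a ++ _ = _
          rw [ih]
          rw [show z + k * p + 1 + (n + 1) * ((k + 1) * p)
              = (z + k * p + 1 + n * ((k + 1) * p)) + a + (z + k * p + 1) by
            simp only [hadef]; ring_nf; omega]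
          rw [split3_aux V (z + k * p + 1 + n * ((k + 1) * p)) a (z + k * p + 1)]
          congr 1
          · congr 1
            symm
            apply List.eq_replicate_iff.mpr
            refine ⟨by simp, ?_⟩
            intro b hb
            simp only [List.mem_map, List.mem_range] at hb
            obtain ⟨i, hi, hbi⟩ := hb
            subst hbi
            rw [show z + k * p + 1 + n * ((k + 1) * p) + i
                = (z + 1 + i) + (k + n * (k + 1)) * p by ring, hmul]
            exact hone _ (by omega) (by omega)
          · symm
            apply List.map_congr_left
            intro i hi
            rw [show z + k * p + 1 + n * ((k + 1) * p) + a + i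
                = i + ((k + 1) + n * (k + 1)) * p by
              simp only [hadef]; ring_nf; omega, hmul]
      intro n
      rw [hstage n]
      intro i hi
      simp only [List.length_map, List.length_range] at hi
      exact hgetD _ _ hi
end

section
/- For every i ∈ ℕ (with the words M_{i,1}, M_{i,2} from the rank-two construction of the Thue–Morse sequence), the longest common prefix of M_{i,1} and M_{i,2} is 0, and the longest common suffix of M_{i,1} and M_{i,2} is 0. -/
lemma len2_of_take {l : List Bool} {a b : Bool} (h : l.take 2 = [a, b]) : 2 ≤ l.length := by
  have := congrArg List.length h
  simp at this
  omega

lemma take2_app {l m : List Bool} (h : 2 ≤ l.length) : (l ++ m).take 2 = l.take 2 :=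
  List.take_append_of_le_length h

lemma take2_prefix {w v : List Bool} (h : w <+: v) (hw : 2 ≤ w.length) :
    v.take 2 = w.take 2 := by
  obtain ⟨t, rfl⟩ := h
  exact take2_app hw

lemma M2aux : ∀ i, ((M2 (i+1)).1.take 2 = [false, true] ∧ (M2 (i+1)).2.take 2 = [false, false]) ∧
    (((M2 (i+1)).1.reverse.take 2 = [false, true] ∧ (M2 (i+1)).2.reverse.take 2 = [false, false]) ∨
     ((M2 (i+1)).1.reverse.take 2 = [false, false] ∧ (M2 (i+1)).2.reverse.take 2 = [false, true])) := by
  intro i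
  induction i with
  | zero => decide
  | succ n ih =>
    obtain ⟨⟨h1, h2⟩, hr⟩ := ih
    have l1 : 2 ≤ (M2 (n+1)).1.length := len2_of_take h1
    have l2 : 2 ≤ (M2 (n+1)).2.length := len2_of_take h2
    have l1r : 2 ≤ (M2 (n+1)).1.reverse.length := by simpa using l1
    have l2r : 2 ≤ (M2 (n+1)).2.reverse.length := by simpa using l2
    have key : ((M2 (n+2)).1.take 2 = (M2 (n+1)).1.take 2 ∧
        (M2 (n+2)).2.take 2 = (M2 (n+1)).2.take 2) ∧
        ((M2 (n+2)).1.reverse.take 2 = (M2 (n+1)).2.reverse.take 2 ∧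
        (M2 (n+2)).2.reverse.take 2 = (M2 (n+1)).1.reverse.take 2) := by
      rcases Nat.mod_two_eq_zero_or_one (n+1) with h | h
      · rw [show M2 (n+2) = ((M2 (n+1)).1 ++ [true, true] ++ (M2 (n+1)).2,
            (M2 (n+1)).2 ++ (M2 (n+1)).1) from by rw [M2]; simp [h]]
        refine ⟨⟨?_, ?_⟩, ?_, ?_⟩
        · simp only [List.append_assoc]; exact take2_app l1
        · exact take2_app l2
        · simp only [List.reverse_append]; exact take2_app l2r
        · simp only [List.reverse_append]; exact take2_app l1r
      · rw [show M2 (n+2) = ((M2 (n+1)).1 ++ [true] ++ (M2 (n+1)).2,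
            (M2 (n+1)).2 ++ [true] ++ (M2 (n+1)).1) from by rw [M2]; simp [h]]
        refine ⟨⟨?_, ?_⟩, ?_, ?_⟩
        · simp only [List.append_assoc]; exact take2_app l1
        · simp only [List.append_assoc]; exact take2_app l2
        · simp only [List.reverse_append, List.append_assoc]; exact take2_app l2r
        · simp only [List.reverse_append, List.append_assoc]; exact take2_app l1r
    obtain ⟨⟨k1, k2⟩, k3, k4⟩ := key
    refine ⟨⟨k1.trans h1, k2.trans h2⟩, ?_⟩
    rcases hr with ⟨r1, r2⟩ | ⟨r1, r2⟩
    · exact Or.inr ⟨k3.trans r2, k4.trans r1⟩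
    · exact Or.inl ⟨k3.trans r2, k4.trans r1⟩

theorem stmt18 : ∀ i,
    ([false] <+: (M2 i).1 ∧ [false] <+: (M2 i).2 ∧
      ∀ w : List Bool, w <+: (M2 i).1 → w <+: (M2 i).2 → w.length ≤ 1) ∧
    ([false] <:+ (M2 i).1 ∧ [false] <:+ (M2 i).2 ∧
      ∀ w : List Bool, w <:+ (M2 i).1 → w <:+ (M2 i).2 → w.length ≤ 1) := by
  intro i
  cases i with
  | zero =>
    refine ⟨⟨List.prefix_refl _, List.prefix_refl _, fun w h _ => by simpa [M2] using h.length_le⟩,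
      List.suffix_refl _, List.suffix_refl _, fun w h _ => by simpa [M2] using h.length_le⟩
  | succ n =>
    obtain ⟨⟨h1, h2⟩, hr⟩ := M2aux n
    have l1 : 2 ≤ (M2 (n+1)).1.length := len2_of_take h1
    have l2 : 2 ≤ (M2 (n+1)).2.length := len2_of_take h2
    have pf1 : [false] <+: (M2 (n+1)).1 := by
      have : (M2 (n+1)).1.take 1 = [false] := by
        have := congrArg (List.take 1) h1; simpa [List.take_take] using this
      rw [← this]; exact List.take_prefix _ _
    have pf2 : [false] <+: (M2 (n+1)).2 := by
      have : (M2 (n+1)).2.take 1 = [false] := by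
        have := congrArg (List.take 1) h2; simpa [List.take_take] using this
      rw [← this]; exact List.take_prefix _ _
    have sufgen : ∀ u : List Bool, u.reverse.take 2 = [false, true] ∨
        u.reverse.take 2 = [false, false] → [false] <:+ u := by
      intro u hu
      have : u.reverse.take 1 = [false] := by
        rcases hu with hu | hu <;>
          · have := congrArg (List.take 1) hu; simpa [List.take_take] using this
      have h' : [false] <+: u.reverse := by rw [← this]; exact List.take_prefix _ _
      exact List.reverse_prefix.mp (by simpa using h')
    have sf1 : [false] <:+ (M2 (n+1)).1 := by
      apply sufgen; rcases hr with ⟨r1, _⟩ | ⟨r1, _⟩ <;> simp [r1]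
    have sf2 : [false] <:+ (M2 (n+1)).2 := by
      apply sufgen; rcases hr with ⟨_, r2⟩ | ⟨_, r2⟩ <;> simp [r2]
    refine ⟨⟨pf1, pf2, ?_⟩, ⟨sf1, sf2, ?_⟩⟩
    · intro w w1 w2
      by_contra hw
      push_neg at hw
      have hw2 : 2 ≤ w.length := hw
      have e1 := take2_prefix w1 hw2
      have e2 := take2_prefix w2 hw2
      rw [h1] at e1; rw [h2] at e2
      have := e1.trans e2.symm
      simp at this
    · intro w w1 w2
      by_contra hw
      push_neg at hw
      have hw2 : 2 ≤ w.reverse.length := by simp; omega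
      have e1 := take2_prefix (List.reverse_prefix.mpr (by simpa using w1)) hw2
      have e2 := take2_prefix (List.reverse_prefix.mpr (by simpa using w2)) hw2
      have e := e1.trans e2.symm
      rcases hr with ⟨r1, r2⟩ | ⟨r1, r2⟩ <;> rw [r1, r2] at e <;> simp at e
end
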